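/- Every C₃ line arrangement of simple type has a rigid pencil form. -/

import Mathlib

noncomputable section
attribute [local instance] Classical.propDecidable
open Module Matrix

abbrev V3 := Fin 3 → ℂ

lemma cross_triple (x v w : V3) :
    crossProduct x (crossProduct v w) = (x ⬝ᵥ w) • v - (x ⬝ᵥ v) • w := by
  funext i
  fin_cases i <;>
    simp [crossProduct, dotProduct, Fin.sum_univ_three] <;> ring

lemma dep_of_cross_eq_zero {u z : V3} (hu : u ≠ 0) (h : crossProduct u z = 0) :
    ∃ c : ℂ, z = c • u := by
  have hni : ¬ LinearIndependent ℂ ![u, z] := by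
    intro hi
    exact (crossProduct_ne_zero_iff_linearIndependent.2 hi) h
  rw [LinearIndependent.pair_iff] at hni
  push_neg at hni
  obtain ⟨s, t, hst, hne⟩ := hni
  have ht : t ≠ 0 := by
    rintro rfl
    have hs0 : s = 0 := by
      by_contra hs
      apply hu
      have := congrArg (fun v => s⁻¹ • v) hst
      simpa [smul_smul, inv_mul_cancel₀ hs] using this
    exact hne hs0 (by rfl)
  refine ⟨-s/t, ?_⟩
  have h2 := congrArg (fun v => t⁻¹ • v) hst
  simp only [smul_add, smul_smul, smul_zero] at h2
  rw [inv_mul_cancel₀ ht] at h2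
  have hz : (t⁻¹ * s) • u + z = 0 := by simpa using h2
  have : z = -((t⁻¹ * s) • u) := by
    have := congrArg (fun v => v - (t⁻¹ * s) • u) hz
    simp at this
    linear_combination (norm := module) this
  rw [this]
  rw [← neg_smul]
  congr 1
  field_simp

lemma perp_unique {v w x : V3} (hvw : LinearIndependent ℂ ![v, w])
    (hx1 : v ⬝ᵥ x = 0) (hx2 : w ⬝ᵥ x = 0) :
    ∃ c : ℂ, x = c • crossProduct v w := by
  have hc : crossProduct v w ≠ 0 := crossProduct_ne_zero_iff_linearIndependent.2 hvw
  have h0 : crossProduct x (crossProduct v w) = 0 := by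
    rw [cross_triple, dotProduct_comm x w, dotProduct_comm x v, hx1, hx2]
    simp
  have h1 : crossProduct (crossProduct v w) x = 0 := by
    have := cross_anticomm x (crossProduct v w)
    rw [h0] at this
    simpa using this.symm
  exact dep_of_cross_eq_zero hc h1

lemma pair_indep_coeffs {v w : V3} (h : LinearIndependent ℂ ![v, w]) {s t : ℂ}
    (hst : s • v + t • w = 0) : s = 0 ∧ t = 0 :=
  LinearIndependent.pair_iff.1 h s t hst

lemma third_combo {u v w : V3} (huv : LinearIndependent ℂ ![u, v])
    (huw : LinearIndependent ℂ ![u, w]) (hvw : LinearIndependent ℂ ![v, w])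
    (h : ¬ LinearIndependent ℂ ![u, v, w]) :
    ∃ α β : ℂ, α ≠ 0 ∧ β ≠ 0 ∧ w = α • u + β • v := by
  rw [Fintype.not_linearIndependent_iff] at h
  obtain ⟨g, hg, i, hi⟩ := h
  rw [Fin.sum_univ_three] at hg
  simp only [Matrix.cons_val_zero, Matrix.cons_val_one, Matrix.head_cons,
    Matrix.cons_val_two, Matrix.tail_cons] at hg
  have hg2 : g 2 ≠ 0 := by
    rintro h2
    rw [h2, zero_smul, add_zero] at hg
    obtain ⟨h0, h1⟩ := pair_indep_coeffs huv hg
    fin_cases i <;> simp_all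
  refine ⟨-(g 0)/g 2, -(g 1)/g 2, ?_, ?_, ?_⟩
  · intro h0
    have hg0 : g 0 = 0 := by
      field_simp at h0
      simpa using h0
    rw [hg0, zero_smul, zero_add] at hg
    obtain ⟨h1, h2⟩ := pair_indep_coeffs hvw hg
    exact hg2 h2
  · intro h1
    have hg1 : g 1 = 0 := by
      field_simp at h1
      simpa using h1
    have hg' : g 0 • u + g 2 • w = 0 := by
      rw [hg1] at hg
      linear_combination (norm := module) hg
    obtain ⟨h1, h2⟩ := pair_indep_coeffs huw hg'
    exact hg2 h2
  · have h2 := congrArg (fun x => (g 2)⁻¹ • x) hg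
    simp only [smul_add, smul_smul, smul_zero, inv_mul_cancel₀ hg2, one_smul] at h2
    have h3 : ((g 2)⁻¹ * g 0) • u + ((g 2)⁻¹ * g 1) • v + w = 0 := h2
    have hw : w = -(((g 2)⁻¹ * g 0) • u) - ((g 2)⁻¹ * g 1) • v := by
      linear_combination (norm := module) h3
    rw [hw]
    match_scalars <;> field_simp

/- ### Projective glue -/



/-- The projective plane: points of `ℙ(ℂ³)`.  A "line" of `ℂP²` with equation
`a x + b y + c z = 0` is identified with the point `(a : b : c)` of the dual plane. -/
abbrev ProjPlane := Projectivization ℂ (Fin 3 → ℂ)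

/-- The line `l = (a : b : c)` passes through the point `q = (x : y : z)`,
i.e. `a x + b y + c z = 0` (well defined on representatives). -/
def incident (l q : ProjPlane) : Prop := ∑ t : Fin 3, l.rep t * q.rep t = 0

lemma incident_def {l q : ProjPlane} : incident l q ↔ l.rep ⬝ᵥ q.rep = 0 := Iff.rfl

lemma incident_symm {l q : ProjPlane} (h : incident l q) : incident q l := by
  rw [incident_def] at h ⊢
  rwa [dotProduct_comm]

lemma proj_eq_of_smul {x y : ProjPlane} (c : ℂ) (h : x.rep = c • y.rep) : x = y := by
  have hc : c ≠ 0 := by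
    rintro rfl
    simp at h
    exact x.rep_nonzero h
  conv_lhs => rw [← x.mk_rep]
  conv_rhs => rw [← y.mk_rep]
  exact (Projectivization.mk_eq_mk_iff' ℂ _ _ x.rep_nonzero y.rep_nonzero).2 ⟨c, h.symm⟩

lemma rep_mk_smul {v : V3} (hv : v ≠ 0) :
    ∃ c : ℂ, c ≠ 0 ∧ (Projectivization.mk ℂ v hv).rep = c • v := by
  obtain ⟨a, ha⟩ := Projectivization.exists_smul_eq_mk_rep ℂ v hv
  exact ⟨a, a.ne_zero, ha.symm⟩

lemma incident_mk_right {w : V3} (hw : w ≠ 0) (l : ProjPlane) :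
    incident l (Projectivization.mk ℂ w hw) ↔ l.rep ⬝ᵥ w = 0 := by
  obtain ⟨c, hc, hrep⟩ := rep_mk_smul hw
  rw [incident_def, hrep, dotProduct_smul]
  simp [hc]

lemma incident_mk_left {v : V3} (hv : v ≠ 0) (q : ProjPlane) :
    incident (Projectivization.mk ℂ v hv) q ↔ v ⬝ᵥ q.rep = 0 := by
  obtain ⟨c, hc, hrep⟩ := rep_mk_smul hv
  rw [incident_def, hrep, smul_dotProduct]
  simp [hc]

lemma indep_rep2 {x y : ProjPlane} (h : x ≠ y) : LinearIndependent ℂ ![x.rep, y.rep] := by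
  rw [LinearIndependent.pair_iff]
  intro s t hst
  by_cases ht : t = 0
  · subst ht
    refine ⟨?_, rfl⟩
    by_contra hs
    apply x.rep_nonzero
    have := congrArg (fun v => s⁻¹ • v) (by simpa using hst : s • x.rep = 0)
    simpa [smul_smul, inv_mul_cancel₀ hs] using this
  · exfalso
    apply h.symm
    apply proj_eq_of_smul (-(t⁻¹ * s))
    have h2 := congrArg (fun v => t⁻¹ • v) hst
    simp only [smul_add, smul_smul, smul_zero, inv_mul_cancel₀ ht, one_smul] at h2
    linear_combination (norm := module) h2

def crossPt (x y : ProjPlane) (h : x ≠ y) : ProjPlane :=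
  Projectivization.mk ℂ (crossProduct x.rep y.rep)
    (crossProduct_ne_zero_iff_linearIndependent.2 (indep_rep2 h))

lemma incident_crossPt_left {x y : ProjPlane} (h : x ≠ y) : incident x (crossPt x y h) := by
  rw [crossPt, incident_mk_right]
  exact dot_self_cross _ _

lemma incident_crossPt_right {x y : ProjPlane} (h : x ≠ y) : incident y (crossPt x y h) := by
  rw [crossPt, incident_mk_right]
  exact dot_cross_self _ _

/-- two distinct lines meet in at most one point (self-dual statement). -/
lemma eq_of_two_lines {l l' q q' : ProjPlane} (hll : l ≠ l') (h1 : incident l q)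
    (h2 : incident l' q) (h3 : incident l q') (h4 : incident l' q') : q = q' := by
  have hi := indep_rep2 hll
  obtain ⟨c, hc⟩ := perp_unique hi h1 h2
  obtain ⟨c', hc'⟩ := perp_unique hi h3 h4
  have hc0 : c ≠ 0 := by rintro rfl; simp at hc; exact q.rep_nonzero hc
  have hc'0 : c' ≠ 0 := by rintro rfl; simp at hc'; exact q'.rep_nonzero hc'
  apply proj_eq_of_smul (c / c')
  rw [hc, hc', smul_smul]
  congr 1
  field_simp

lemma projMap_eq {g : V3 ≃ₗ[ℂ] V3} {x y : ProjPlane} {c : ℂ} (hc : c ≠ 0)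
    (h : g x.rep = c • y.rep) :
    Projectivization.map (g : V3 →ₗ[ℂ] V3) (by simpa using g.injective) x = y := by
  conv_lhs => rw [← x.mk_rep]
  rw [Projectivization.map_mk]
  conv_rhs => rw [← y.mk_rep]
  exact (Projectivization.mk_eq_mk_iff' ℂ _ _ _ y.rep_nonzero).2 ⟨c, h.symm⟩

/- ### Basis machinery -/

lemma finrank_V3 : Module.finrank ℂ V3 = 3 := by
  simp [finrank_fin_fun]

lemma card_eq_finrank3 : Fintype.card (Fin 3) = Module.finrank ℂ V3 := by
  simp [finrank_V3]

lemma exists_equiv_of_bases {u u' : Fin 3 → V3} (hu : LinearIndependent ℂ u)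
    (hu' : LinearIndependent ℂ u') :
    ∃ g : V3 ≃ₗ[ℂ] V3, ∀ k, g (u k) = u' k := by
  let b := basisOfLinearIndependentOfCardEqFinrank hu card_eq_finrank3
  let b' := basisOfLinearIndependentOfCardEqFinrank hu' card_eq_finrank3
  refine ⟨b.equiv b' (Equiv.refl _), fun k => ?_⟩
  have h1 : b k = u k := by
    rw [coe_basisOfLinearIndependentOfCardEqFinrank]
  have h2 : b' k = u' k := by
    rw [coe_basisOfLinearIndependentOfCardEqFinrank]
  rw [← h1, Basis.equiv_apply, Equiv.refl_apply, h2]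

lemma extend_indep {m : ℕ} (hm : m < 3) {u : Fin m → V3} (hu : LinearIndependent ℂ u) :
    ∃ x, LinearIndependent ℂ (Fin.snoc u x) := by
  have hsp : Submodule.span ℂ (Set.range u) ≠ ⊤ := by
    intro hsp
    have h1 := finrank_span_eq_card hu
    rw [hsp] at h1
    rw [finrank_top, finrank_V3] at h1
    simp at h1
    omega
  obtain ⟨x, hx⟩ : ∃ x, x ∉ Submodule.span ℂ (Set.range u) := by
    by_contra h
    push_neg at h
    exact hsp (Submodule.eq_top_iff'.2 h)
  exact ⟨x, linearIndependent_fin_snoc.2 ⟨hu, hx⟩⟩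

lemma pad2 {u : Fin 2 → V3} (hu : LinearIndependent ℂ u) :
    ∃ w : Fin 3 → V3, LinearIndependent ℂ w ∧ w 0 = u 0 ∧ w 1 = u 1 := by
  obtain ⟨x, hx⟩ := extend_indep (by norm_num) hu
  refine ⟨Fin.snoc u x, hx, ?_, ?_⟩
  · simp [Fin.snoc]
  · simp [Fin.snoc]

lemma pad1 {v : V3} (hv : v ≠ 0) :
    ∃ w : Fin 3 → V3, LinearIndependent ℂ w ∧ w 0 = v := by
  have h1 : LinearIndependent ℂ (fun _ : Fin 1 => v) := by
    apply linearIndependent_unique_iff.2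
    exact hv
  obtain ⟨x, hx⟩ := extend_indep (by norm_num) h1
  obtain ⟨w, hw, hw0, _⟩ := pad2 hx
  refine ⟨w, hw, ?_⟩
  rw [hw0]
  simp [Fin.snoc]

lemma perp_all_eq_zero {u : Fin 3 → V3} (hu : LinearIndependent ℂ u) {q : V3}
    (h : ∀ k, u k ⬝ᵥ q = 0) : q = 0 := by
  let b := basisOfLinearIndependentOfCardEqFinrank hu card_eq_finrank3
  have hb : ⇑b = u := coe_basisOfLinearIndependentOfCardEqFinrank _ _
  have hall : ∀ v : V3, v ⬝ᵥ q = 0 := by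
    intro v
    have hv : v ∈ Submodule.span ℂ (Set.range u) := by
      rw [← hb, b.span_eq]
      trivial
    induction hv using Submodule.span_induction with
    | mem x hx => obtain ⟨k, rfl⟩ := hx; exact h k
    | zero => simp
    | add x y _ _ hx hy => rw [add_dotProduct, hx, hy, add_zero]
    | smul c x _ hx => rw [smul_dotProduct, hx, smul_zero]
  funext i
  have := hall (Pi.single i 1)
  simpa [dotProduct, Pi.single_apply] using this

lemma indep_smul {ι : Type} [Fintype ι] {u : ι → V3} (hu : LinearIndependent ℂ u) {c : ι → ℂ}
    (hc : ∀ k, c k ≠ 0) : LinearIndependent ℂ (fun k => c k • u k) := by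
  rw [Fintype.linearIndependent_iff] at hu ⊢
  intro g hg i
  have := hu (fun k => g k * c k) (by
    rw [← hg]
    congr 1
    funext k
    rw [smul_smul]) i
  rcases mul_eq_zero.1 this with h | h
  · exact h
  · exact absurd h (hc i)

lemma not_concurrent_of_indep {x y z : ProjPlane}
    (h : LinearIndependent ℂ ![x.rep, y.rep, z.rep]) :
    ¬ ∃ q, incident x q ∧ incident y q ∧ incident z q := by
  rintro ⟨q, h1, h2, h3⟩
  apply q.rep_nonzero
  apply perp_all_eq_zero h
  intro k
  fin_cases k
  · exact h1
  · exact h2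
  · exact h3

lemma indep_of_not_concurrent {x y z : ProjPlane} (hxy : x ≠ y) (hxz : x ≠ z) (hyz : y ≠ z)
    (h : ¬ ∃ q, incident x q ∧ incident y q ∧ incident z q) :
    LinearIndependent ℂ ![x.rep, y.rep, z.rep] := by
  by_contra hdep
  obtain ⟨α, β, hα, hβ, hz⟩ := third_combo (indep_rep2 hxy) (indep_rep2 hxz) (indep_rep2 hyz) hdep
  refine h ⟨crossPt x y hxy, incident_crossPt_left hxy, incident_crossPt_right hxy, ?_⟩
  rw [crossPt, incident_mk_right, hz]
  rw [add_dotProduct, smul_dotProduct, smul_dotProduct, dot_self_cross, dot_cross_self]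
  simp

lemma conc_combo {x y z : ProjPlane} (hxy : x ≠ y) (hxz : x ≠ z) (hyz : y ≠ z)
    (hq : ∃ q, incident x q ∧ incident y q ∧ incident z q) :
    ∃ α β : ℂ, α ≠ 0 ∧ β ≠ 0 ∧ z.rep = α • x.rep + β • y.rep := by
  apply third_combo (indep_rep2 hxy) (indep_rep2 hxz) (indep_rep2 hyz)
  intro hind
  exact not_concurrent_of_indep hind hq


/-- The set of indices of lines of the arrangement `A` passing through `q`. -/
def pointSet {ι : Type} [Fintype ι] [DecidableEq ι] (A : ι → ProjPlane) (q : ProjPlane) :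
    Finset ι :=
  Finset.univ.filter fun i => incident (A i) q

/-- The combinatorics of the arrangement `A`: the collection of the sets `P(q)` of lines
through `q`, for the points `q` lying on at least two lines (the singular points). -/
def combinatorics {ι : Type} [Fintype ι] [DecidableEq ι] (A : ι → ProjPlane) :
    Finset (Finset ι) :=
  Finset.univ.filter fun P => 2 ≤ P.card ∧ ∃ q, P = pointSet A q

/-- The action of a linear automorphism of `ℂ³` (an element of `GL₃(ℂ)`, inducing an
element of `PGL₃(ℂ)`) on the projective plane. -/
def projMap (g : (Fin 3 → ℂ) ≃ₗ[ℂ] (Fin 3 → ℂ)) (x : ProjPlane) : ProjPlane :=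
  Projectivization.map (g : (Fin 3 → ℂ) →ₗ[ℂ] (Fin 3 → ℂ)) (by simpa using g.injective) x

lemma projMap_eq' {g : V3 ≃ₗ[ℂ] V3} {x y : ProjPlane} {c : ℂ} (hc : c ≠ 0)
    (h : g x.rep = c • y.rep) : y = projMap g x :=
  (projMap_eq hc h).symm

/- ### Rigidity of small arrangements -/

lemma rigid0 (A' B : Fin 0 → ProjPlane) :
    ∃ g : V3 ≃ₗ[ℂ] V3, ∀ k, B k = projMap g (A' k) :=
  ⟨LinearEquiv.refl ℂ V3, fun k => k.elim0⟩

lemma rigid1 (A' B : Fin 1 → ProjPlane) :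
    ∃ g : V3 ≃ₗ[ℂ] V3, ∀ k, B k = projMap g (A' k) := by
  obtain ⟨w, hw, hw0⟩ := pad1 (A' 0).rep_nonzero
  obtain ⟨w', hw', hw0'⟩ := pad1 (B 0).rep_nonzero
  obtain ⟨g, hg⟩ := exists_equiv_of_bases hw hw'
  refine ⟨g, fun k => ?_⟩
  have hk : k = 0 := Subsingleton.elim _ _
  subst hk
  apply projMap_eq' (c := (1:ℂ)) one_ne_zero
  rw [one_smul, ← hw0, ← hw0']
  exact hg 0

lemma rigid2 (A' B : Fin 2 → ProjPlane) (hA : A' 0 ≠ A' 1) (hB : B 0 ≠ B 1) :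
    ∃ g : V3 ≃ₗ[ℂ] V3, ∀ k, B k = projMap g (A' k) := by
  have hiA : LinearIndependent ℂ (fun k : Fin 2 => (A' k).rep) := by
    have : (fun k : Fin 2 => (A' k).rep) = ![(A' 0).rep, (A' 1).rep] := by
      funext k; fin_cases k <;> rfl
    rw [this]; exact indep_rep2 hA
  have hiB : LinearIndependent ℂ (fun k : Fin 2 => (B k).rep) := by
    have : (fun k : Fin 2 => (B k).rep) = ![(B 0).rep, (B 1).rep] := by
      funext k; fin_cases k <;> rfl
    rw [this]; exact indep_rep2 hB
  obtain ⟨w, hw, hw0, hw1⟩ := pad2 hiA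
  obtain ⟨w', hw', hw0', hw1'⟩ := pad2 hiB
  obtain ⟨g, hg⟩ := exists_equiv_of_bases hw hw'
  refine ⟨g, fun k => ?_⟩
  fin_cases k
  · apply projMap_eq' (c := (1:ℂ)) one_ne_zero
    rw [one_smul]
    show g (A' 0).rep = (B 0).rep
    rw [← hw0, ← hw0']; exact hg 0
  · apply projMap_eq' (c := (1:ℂ)) one_ne_zero
    rw [one_smul]
    show g (A' 1).rep = (B 1).rep
    rw [← hw1, ← hw1']; exact hg 1

lemma rigid3_indep (A' B : Fin 3 → ProjPlane)
    (hA : LinearIndependent ℂ (fun k => (A' k).rep))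
    (hB : LinearIndependent ℂ (fun k => (B k).rep)) :
    ∃ g : V3 ≃ₗ[ℂ] V3, ∀ k, B k = projMap g (A' k) := by
  obtain ⟨g, hg⟩ := exists_equiv_of_bases hA hB
  exact ⟨g, fun k => projMap_eq' (c := (1:ℂ)) one_ne_zero (by rw [one_smul]; exact hg k)⟩

lemma rigid3_conc (A' B : Fin 3 → ProjPlane) (hAinj : Function.Injective A')
    (hBinj : Function.Injective B)
    (hAc : ∃ q, ∀ k, incident (A' k) q) (hBc : ∃ q, ∀ k, incident (B k) q) :
    ∃ g : V3 ≃ₗ[ℂ] V3, ∀ k, B k = projMap g (A' k) := by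
  have hA01 : A' 0 ≠ A' 1 := fun h => by simpa using hAinj h
  have hA02 : A' 0 ≠ A' 2 := fun h => by simpa using hAinj h
  have hA12 : A' 1 ≠ A' 2 := fun h => by simpa using hAinj h
  have hB01 : B 0 ≠ B 1 := fun h => by simpa using hBinj h
  have hB02 : B 0 ≠ B 2 := fun h => by simpa using hBinj h
  have hB12 : B 1 ≠ B 2 := fun h => by simpa using hBinj h
  obtain ⟨γ, δ, hγ, hδ, hA2⟩ := conc_combo hA01 hA02 hA12
    (by obtain ⟨q, hq⟩ := hAc; exact ⟨q, hq 0, hq 1, hq 2⟩)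
  obtain ⟨α, β, hα, hβ, hB2⟩ := conc_combo hB01 hB02 hB12
    (by obtain ⟨q, hq⟩ := hBc; exact ⟨q, hq 0, hq 1, hq 2⟩)
  have hiA : LinearIndependent ℂ (![γ • (A' 0).rep, δ • (A' 1).rep]) := by
    have h2 := indep_smul (indep_rep2 hA01) (c := ![γ, δ])
      (by intro k; fin_cases k <;> simpa)
    have he : (fun k => ![γ, δ] k • ![(A' 0).rep, (A' 1).rep] k)
        = ![γ • (A' 0).rep, δ • (A' 1).rep] := by
      funext k; fin_cases k <;> rfl
    rwa [he] at h2
  have hiB : LinearIndependent ℂ (![α • (B 0).rep, β • (B 1).rep]) := by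
    have h2 := indep_smul (indep_rep2 hB01) (c := ![α, β])
      (by intro k; fin_cases k <;> simpa)
    have he : (fun k => ![α, β] k • ![(B 0).rep, (B 1).rep] k)
        = ![α • (B 0).rep, β • (B 1).rep] := by
      funext k; fin_cases k <;> rfl
    rwa [he] at h2
  obtain ⟨w, hw, hw0, hw1⟩ := pad2 hiA
  obtain ⟨w', hw', hw0', hw1'⟩ := pad2 hiB
  simp only [Matrix.cons_val_zero, Matrix.cons_val_one, Matrix.head_cons] at hw0 hw1 hw0' hw1'
  obtain ⟨g, hg⟩ := exists_equiv_of_bases hw hw'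
  have e0 : γ • g (A' 0).rep = α • (B 0).rep := by
    rw [← _root_.map_smul, ← hw0, ← hw0']; exact hg 0
  have e1 : δ • g (A' 1).rep = β • (B 1).rep := by
    rw [← _root_.map_smul, ← hw1, ← hw1']; exact hg 1
  refine ⟨g, fun k => ?_⟩
  fin_cases k
  · show B 0 = projMap g (A' 0)
    apply projMap_eq' (c := α/γ) (div_ne_zero hα hγ)
    have := congrArg (fun v => γ⁻¹ • v) e0
    simp only [smul_smul, inv_mul_cancel₀ hγ, one_smul] at this
    rw [this]
    congr 1
    field_simp
  · show B 1 = projMap g (A' 1)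
    apply projMap_eq' (c := β/δ) (div_ne_zero hβ hδ)
    have := congrArg (fun v => δ⁻¹ • v) e1
    simp only [smul_smul, inv_mul_cancel₀ hδ, one_smul] at this
    rw [this]
    congr 1
    field_simp
  · show B 2 = projMap g (A' 2)
    apply projMap_eq' (c := (1:ℂ)) one_ne_zero
    rw [one_smul, hB2, hA2, map_add, ← e0, ← e1, _root_.map_smul, _root_.map_smul]

lemma frame_combo (A' : Fin 4 → ProjPlane)
    (hA : ∀ f : Fin 3 → Fin 4, Function.Injective f →
      LinearIndependent ℂ (fun k => (A' (f k)).rep)) :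
    ∃ α β γ : ℂ, α ≠ 0 ∧ β ≠ 0 ∧ γ ≠ 0 ∧
      (A' 3).rep = α • (A' 0).rep + β • (A' 1).rep + γ • (A' 2).rep := by
  set u : Fin 4 → V3 := fun k => (A' k).rep with hu
  have h012 : LinearIndependent ℂ (fun k => u (![0, 1, 2] k)) :=
    hA ![0, 1, 2] (by decide)
  let b := basisOfLinearIndependentOfCardEqFinrank h012 card_eq_finrank3
  have hb : ∀ i, b i = u (![0, 1, 2] i) := fun i =>
    congrFun (coe_basisOfLinearIndependentOfCardEqFinrank _ _) i
  have hrepr := b.sum_repr (u 3)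
  rw [Fin.sum_univ_three] at hrepr
  rw [hb 0, hb 1, hb 2] at hrepr
  set α := b.repr (u 3) 0
  set β := b.repr (u 3) 1
  set γ := b.repr (u 3) 2
  have hsum : u 3 = α • u 0 + β • u 1 + γ • u 2 := by
    rw [← hrepr]; rfl
  have hnz : ∀ (f : Fin 3 → Fin 4), Function.Injective f →
      ∀ c d : ℂ, u (f 2) = c • u (f 0) + d • u (f 1) → False := by
    intro f hf c d hcd
    apply Fintype.not_linearIndependent_iff.2 ?_ (hA f hf)
    refine ⟨![c, d, -1], ?_, ⟨2, by simp⟩⟩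
    rw [Fin.sum_univ_three]
    simp only [Matrix.cons_val_zero, Matrix.cons_val_one, Matrix.head_cons,
      Matrix.cons_val_two, Matrix.tail_cons]
    rw [show Projectivization.rep (A' (f 2)) = c • Projectivization.rep (A' (f 0))
      + d • Projectivization.rep (A' (f 1)) from hcd]
    module
  refine ⟨α, β, γ, ?_, ?_, ?_, hsum⟩
  · rintro h0
    rw [h0, zero_smul, zero_add] at hsum
    exact hnz ![1, 2, 3] (by decide) β γ hsum
  · rintro h0
    rw [h0, zero_smul] at hsum
    have hsum' : u 3 = α • u 0 + γ • u 2 := by rw [hsum]; abel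
    exact hnz ![0, 2, 3] (by decide) α γ hsum'
  · rintro h0
    rw [h0, zero_smul, add_zero] at hsum
    exact hnz ![0, 1, 3] (by decide) α β hsum

lemma rigid4_frame (A' B : Fin 4 → ProjPlane)
    (hA : ∀ f : Fin 3 → Fin 4, Function.Injective f →
      LinearIndependent ℂ (fun k => (A' (f k)).rep))
    (hB : ∀ f : Fin 3 → Fin 4, Function.Injective f →
      LinearIndependent ℂ (fun k => (B (f k)).rep)) :
    ∃ g : V3 ≃ₗ[ℂ] V3, ∀ k, B k = projMap g (A' k) := by
  obtain ⟨α, β, γ, hα, hβ, hγ, hA3⟩ := frame_combo A' hA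
  obtain ⟨α', β', γ', hα', hβ', hγ', hB3⟩ := frame_combo B hB
  have hiA : LinearIndependent ℂ
      (fun k : Fin 3 => ![α, β, γ] k • (A' (![0,1,2] k)).rep) :=
    indep_smul (hA ![0,1,2] (by decide)) (by intro k; fin_cases k <;> simpa)
  have hiB : LinearIndependent ℂ
      (fun k : Fin 3 => ![α', β', γ'] k • (B (![0,1,2] k)).rep) :=
    indep_smul (hB ![0,1,2] (by decide)) (by intro k; fin_cases k <;> simpa)
  obtain ⟨g, hg⟩ := exists_equiv_of_bases hiA hiB
  have e0 : α • g (A' 0).rep = α' • (B 0).rep := by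
    rw [← _root_.map_smul]; exact hg 0
  have e1 : β • g (A' 1).rep = β' • (B 1).rep := by
    rw [← _root_.map_smul]; exact hg 1
  have e2 : γ • g (A' 2).rep = γ' • (B 2).rep := by
    rw [← _root_.map_smul]; exact hg 2
  have key : ∀ (x y : ProjPlane) (c c' : ℂ), c ≠ 0 → c' ≠ 0 →
      c • g x.rep = c' • y.rep → y = projMap g x := by
    intro x y c c' hc hc' he
    apply projMap_eq' (c := c'/c) (div_ne_zero hc' hc)
    have := congrArg (fun v => c⁻¹ • v) he
    simp only [smul_smul, inv_mul_cancel₀ hc, one_smul] at this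
    rw [this]
    congr 1
    field_simp
  refine ⟨g, fun k => ?_⟩
  fin_cases k
  · exact key _ _ α α' hα hα' e0
  · exact key _ _ β β' hβ hβ' e1
  · exact key _ _ γ γ' hγ hγ' e2
  · show B 3 = projMap g (A' 3)
    apply projMap_eq' (c := (1:ℂ)) one_ne_zero
    rw [one_smul, hB3, hA3]
    rw [map_add, map_add, _root_.map_smul, _root_.map_smul, _root_.map_smul]
    rw [← e0, ← e1, ← e2]


/-- Equivalence of (abstract) combinatorics given as collections of subsets of `Fin n`:
some relabelling of the lines carries one onto the other. -/
def CombEquiv {n : ℕ} (Q R : Finset (Finset (Fin n))) : Prop :=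
  ∃ σ : Equiv.Perm (Fin n), Q.image (Finset.image σ) = R

/-- The subarrangement `A_i` formed by the first `i` lines of `A` in the order `ω`. -/
def subArr {ι : Type} [Fintype ι] [DecidableEq ι] (A : ι → ProjPlane)
    (ω : ι ≃ Fin (Fintype.card ι)) (i : ℕ) (h : i ≤ Fintype.card ι) : Fin i → ProjPlane :=
  fun k => A (ω.symm (Fin.castLE h k))

/-- `A` is inductively rigid: for some order `ω`, every line arrangement whose
combinatorics is equivalent to `C(A_i)` lies in the `PGL₃(ℂ)`-orbit of `A_i`,
i.e. the moduli space of each `A_i` is a single point. -/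
def InductivelyRigid {ι : Type} [Fintype ι] [DecidableEq ι] (A : ι → ProjPlane) : Prop :=
  ∃ ω : ι ≃ Fin (Fintype.card ι), ∀ (i : ℕ) (h : i ≤ Fintype.card ι)
    (B : Fin i → ProjPlane), Function.Injective B →
    CombEquiv (combinatorics B) (combinatorics (subArr A ω i h)) →
    ∃ g : (Fin 3 → ℂ) ≃ₗ[ℂ] (Fin 3 → ℂ), ∀ k, B k = projMap g (subArr A ω i h k)

/- ### combinatorial helpers -/

lemma mem_pointSet {ι : Type} [Fintype ι] [DecidableEq ι] {A : ι → ProjPlane}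
    {q : ProjPlane} {i : ι} : i ∈ pointSet A q ↔ incident (A i) q := by
  simp [pointSet]

lemma mem_combinatorics {ι : Type} [Fintype ι] [DecidableEq ι] {A : ι → ProjPlane}
    {P : Finset ι} : P ∈ combinatorics A ↔ 2 ≤ P.card ∧ ∃ q, P = pointSet A q := by
  simp [combinatorics]

lemma exists_three {α : Type*} {s : Finset α} (h : 3 ≤ s.card) :
    ∃ a b c, a ∈ s ∧ b ∈ s ∧ c ∈ s ∧ a ≠ b ∧ a ≠ c ∧ b ≠ c := by
  classical
  obtain ⟨a, ha⟩ := Finset.card_pos.1 (show 0 < s.card by omega)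
  have he1 := Finset.card_erase_of_mem ha
  obtain ⟨b, hb⟩ := Finset.card_pos.1 (show 0 < (s.erase a).card by omega)
  have he2 := Finset.card_erase_of_mem hb
  obtain ⟨c, hc⟩ := Finset.card_pos.1 (show 0 < ((s.erase a).erase b).card by omega)
  obtain ⟨hcb, hc'⟩ := Finset.mem_erase.1 hc
  obtain ⟨hca, hcs⟩ := Finset.mem_erase.1 hc'
  obtain ⟨hba, hbs⟩ := Finset.mem_erase.1 hb
  exact ⟨a, b, c, ha, hbs, hcs, (Ne.symm hba), (Ne.symm hca), (Ne.symm hcb)⟩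

lemma subArr_injective {ι : Type} [Fintype ι] [DecidableEq ι] {A : ι → ProjPlane}
    (hA : Function.Injective A) (ω : ι ≃ Fin (Fintype.card ι)) (i : ℕ)
    (h : i ≤ Fintype.card ι) : Function.Injective (subArr A ω i h) := by
  intro j k hjk
  have := hA hjk
  have := ω.symm.injective this
  exact Fin.castLE_injective h this

/-- the pointSet of a subtriple has card `≤ 2` when no three lines are concurrent -/
lemma combEquiv_transfer {i : ℕ} {B : Fin i → ProjPlane} {A' : Fin i → ProjPlane}
    (hce : CombEquiv (combinatorics B) (combinatorics A'))
    {P : Finset (Fin i)} (hP : P ∈ combinatorics B) :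
    ∃ T ∈ combinatorics A', T.card = P.card := by
  obtain ⟨σ, hσ⟩ := hce
  refine ⟨P.image σ, ?_, Finset.card_image_of_injective P σ.injective⟩
  rw [← hσ]
  exact Finset.mem_image_of_mem _ hP

lemma combEquiv_transfer' {i : ℕ} {B : Fin i → ProjPlane} {A' : Fin i → ProjPlane}
    (hce : CombEquiv (combinatorics B) (combinatorics A'))
    {T : Finset (Fin i)} (hT : T ∈ combinatorics A') :
    ∃ P ∈ combinatorics B, P.card = T.card := by
  obtain ⟨σ, hσ⟩ := hce
  rw [← hσ] at hT
  obtain ⟨P, hP, hPT⟩ := Finset.mem_image.1 hT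
  exact ⟨P, hP, by rw [← hPT, Finset.card_image_of_injective P σ.injective]⟩

lemma concurrent_of_dep {x y z : ProjPlane} (hxy : x ≠ y) (hxz : x ≠ z) (hyz : y ≠ z)
    (hdep : ¬ LinearIndependent ℂ ![x.rep, y.rep, z.rep]) :
    ∃ q, incident x q ∧ incident y q ∧ incident z q := by
  by_contra h
  exact hdep (indep_of_not_concurrent hxy hxz hyz h)

lemma fun_eq_vec3 (C : Fin 3 → ProjPlane) :
    (fun k => (C k).rep) = ![(C 0).rep, (C 1).rep, (C 2).rep] := by
  funext k; fin_cases k <;> rfl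

/-- From equivalent combinatorics with an arrangement having no triple points,
`B` has independent representatives (given pairwise distinct). -/
lemma B_indep_of_no_triple {i : ℕ} {B A' : Fin 3 → ProjPlane}
    (hce : CombEquiv (combinatorics B) (combinatorics A'))
    (hBinj : Function.Injective B)
    (hA'nc : ¬ ∃ q, incident (A' 0) q ∧ incident (A' 1) q ∧ incident (A' 2) q) :
    LinearIndependent ℂ (fun k => (B k).rep) := by
  rw [fun_eq_vec3]
  by_contra hdep
  obtain ⟨q, h0, h1, h2⟩ := concurrent_of_dep (hBinj.ne (by decide)) (hBinj.ne (by decide))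
    (hBinj.ne (by decide)) hdep
  have huniv : (Finset.univ : Finset (Fin 3)) ∈ combinatorics B := by
    rw [mem_combinatorics]
    refine ⟨by simp, q, ?_⟩
    apply Finset.eq_univ_iff_forall.2 ?_ |>.symm
    intro k
    rw [mem_pointSet]
    fin_cases k <;> assumption
  obtain ⟨T, hT, hTcard⟩ := combEquiv_transfer hce huniv
  rw [mem_combinatorics] at hT
  obtain ⟨_, q', hq'⟩ := hT
  have hTuniv : T = Finset.univ := Finset.eq_univ_of_card T (by simp [hTcard])
  apply hA'nc
  refine ⟨q', ?_, ?_, ?_⟩ <;>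
  · rw [← mem_pointSet (A := A'), ← hq', hTuniv]
    exact Finset.mem_univ _

/- ### inductively rigid wrappers -/

lemma IR_three_noconc {ι : Type} [Fintype ι] [DecidableEq ι] (A : ι → ProjPlane)
    (hinj : Function.Injective A) (hcard : Fintype.card ι = 3)
    (hnc : ¬ ∃ q, ∀ i, incident (A i) q) : InductivelyRigid A := by
  refine ⟨Fintype.equivFin ι, ?_⟩
  intro i h B hBinj hce
  have hi3 : i ≤ 3 := hcard ▸ h
  set ω := Fintype.equivFin ι
  interval_cases i
  · exact rigid0 _ B
  · exact rigid1 _ B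
  · exact rigid2 _ B ((subArr_injective hinj ω 2 h).ne (by decide)) (hBinj.ne (by decide))
  · -- i = 3
    set A3 := subArr A ω 3 h with hA3
    have hsurj : Function.Surjective (fun k : Fin 3 => ω.symm (Fin.castLE h k)) := by
      have hbij := (Fintype.bijective_iff_injective_and_card
        (fun k : Fin 3 => ω.symm (Fin.castLE h k))).2
        ⟨fun j k hjk => Fin.castLE_injective h (ω.symm.injective hjk), by simp [hcard]⟩
      exact hbij.2
    have hnc3 : ¬ ∃ q, incident (A3 0) q ∧ incident (A3 1) q ∧ incident (A3 2) q := by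
      rintro ⟨q, h0, h1, h2⟩
      apply hnc
      refine ⟨q, fun j => ?_⟩
      obtain ⟨k, hk⟩ := hsurj j
      have : A3 k = A j := by rw [hA3]; simp [subArr, hk]
      rw [← this]
      fin_cases k <;> assumption
    have hA3inj : Function.Injective A3 := subArr_injective hinj ω 3 h
    have hA3ind : LinearIndependent ℂ (fun k => (A3 k).rep) := by
      rw [fun_eq_vec3]
      exact indep_of_not_concurrent (hA3inj.ne (by decide)) (hA3inj.ne (by decide))
        (hA3inj.ne (by decide)) hnc3
    exact rigid3_indep A3 B hA3ind (B_indep_of_no_triple (i := 3) hce hBinj hnc3)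

lemma IR_three_conc {ι : Type} [Fintype ι] [DecidableEq ι] (A : ι → ProjPlane)
    (hinj : Function.Injective A) (hcard : Fintype.card ι = 3)
    (hc : ∃ q, ∀ i, incident (A i) q) : InductivelyRigid A := by
  refine ⟨Fintype.equivFin ι, ?_⟩
  intro i h B hBinj hce
  have hi3 : i ≤ 3 := hcard ▸ h
  set ω := Fintype.equivFin ι
  interval_cases i
  · exact rigid0 _ B
  · exact rigid1 _ B
  · exact rigid2 _ B ((subArr_injective hinj ω 2 h).ne (by decide)) (hBinj.ne (by decide))
  · set A3 := subArr A ω 3 h with hA3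
    have hA3inj : Function.Injective A3 := subArr_injective hinj ω 3 h
    obtain ⟨q₀, hq₀⟩ := hc
    have hA3c : ∃ q, ∀ k, incident (A3 k) q := ⟨q₀, fun k => hq₀ _⟩
    -- transfer concurrency to B
    have huniv : (Finset.univ : Finset (Fin 3)) ∈ combinatorics A3 := by
      rw [mem_combinatorics]
      obtain ⟨q, hq⟩ := hA3c
      refine ⟨by simp, q, ?_⟩
      apply Finset.eq_univ_iff_forall.2 ?_ |>.symm
      intro k
      rw [mem_pointSet]
      exact hq k
    obtain ⟨P, hP, hPcard⟩ := combEquiv_transfer' hce huniv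
    rw [mem_combinatorics] at hP
    obtain ⟨_, q', hq'⟩ := hP
    have hPuniv : P = Finset.univ := Finset.eq_univ_of_card P (by simp [hPcard])
    have hBc : ∃ q, ∀ k, incident (B k) q := by
      refine ⟨q', fun k => ?_⟩
      rw [← mem_pointSet (A := B), ← hq', hPuniv]
      exact Finset.mem_univ _
    exact rigid3_conc A3 B hA3inj hBinj hA3c hBc

lemma IR_four {ι : Type} [Fintype ι] [DecidableEq ι] (A : ι → ProjPlane)
    (hinj : Function.Injective A) (hcard : Fintype.card ι = 4)
    (hnc3 : ∀ (q : ProjPlane) (i j k : ι), i ≠ j → i ≠ k → j ≠ k →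
      ¬ (incident (A i) q ∧ incident (A j) q ∧ incident (A k) q)) :
    InductivelyRigid A := by
  refine ⟨Fintype.equivFin ι, ?_⟩
  intro i h B hBinj hce
  have hi4 : i ≤ 4 := hcard ▸ h
  set ω := Fintype.equivFin ι
  -- a reusable fact: any injective triple of lines of `A` gives independent reps
  have htriple : ∀ f : Fin 3 → ι, Function.Injective f →
      LinearIndependent ℂ (fun k => (A (f k)).rep) := by
    intro f hf
    rw [fun_eq_vec3 (fun k => A (f k))]
    apply indep_of_not_concurrent (hinj.ne (hf.ne (by decide)))
      (hinj.ne (hf.ne (by decide))) (hinj.ne (hf.ne (by decide)))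
    rintro ⟨q, h1, h2, h3⟩
    exact hnc3 q (f 0) (f 1) (f 2) (hf.ne (by decide)) (hf.ne (by decide))
      (hf.ne (by decide)) ⟨h1, h2, h3⟩
  -- any point lies on at most two of the lines of `A`
  have hps : ∀ q : ProjPlane, (pointSet A q).card ≤ 2 := by
    intro q
    by_contra hgt
    obtain ⟨a, b, c, ha, hb, hc, hab, hac, hbc⟩ := exists_three (show 3 ≤ (pointSet A q).card by omega)
    exact hnc3 q a b c hab hac hbc
      ⟨mem_pointSet.1 ha, mem_pointSet.1 hb, mem_pointSet.1 hc⟩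
  interval_cases i
  · exact rigid0 _ B
  · exact rigid1 _ B
  · exact rigid2 _ B ((subArr_injective hinj ω 2 h).ne (by decide)) (hBinj.ne (by decide))
  · -- i = 3
    set A3 := subArr A ω 3 h with hA3
    have hA3nc : ¬ ∃ q, incident (A3 0) q ∧ incident (A3 1) q ∧ incident (A3 2) q := by
      rintro ⟨q, h1, h2, h3⟩
      have hemb : Function.Injective (fun k : Fin 3 => ω.symm (Fin.castLE h k)) :=
        fun j k hjk => Fin.castLE_injective h (ω.symm.injective hjk)
      exact hnc3 q _ _ _ (hemb.ne (show (0:Fin 3) ≠ 1 by decide))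
        (hemb.ne (show (0:Fin 3) ≠ 2 by decide)) (hemb.ne (show (1:Fin 3) ≠ 2 by decide))
        ⟨h1, h2, h3⟩
    have hA3ind : LinearIndependent ℂ (fun k => (A3 k).rep) :=
      htriple (fun k => ω.symm (Fin.castLE h k))
        (fun j k hjk => Fin.castLE_injective h (ω.symm.injective hjk))
    exact rigid3_indep A3 B hA3ind (B_indep_of_no_triple (i := 3) hce hBinj hA3nc)
  · -- i = 4
    set A4 := subArr A ω 4 h with hA4
    have hemb : Function.Injective (fun k : Fin 4 => ω.symm (Fin.castLE h k)) :=
      fun j k hjk => Fin.castLE_injective h (ω.symm.injective hjk)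
    have hA4frame : ∀ f : Fin 3 → Fin 4, Function.Injective f →
        LinearIndependent ℂ (fun k => (A4 (f k)).rep) := by
      intro f hf
      exact htriple (fun k => ω.symm (Fin.castLE h (f k))) (fun j k hjk =>
        hf (Fin.castLE_injective h (ω.symm.injective hjk)))
    have hBframe : ∀ f : Fin 3 → Fin 4, Function.Injective f →
        LinearIndependent ℂ (fun k => (B (f k)).rep) := by
      intro f hf
      rw [fun_eq_vec3 (fun k => B (f k))]
      by_contra hdep
      obtain ⟨q, h1, h2, h3⟩ := concurrent_of_dep (hBinj.ne (hf.ne (by decide)))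
        (hBinj.ne (hf.ne (by decide))) (hBinj.ne (hf.ne (by decide))) hdep
      -- `pointSet B q` has at least three elements
      have hsub : ({f 0, f 1, f 2} : Finset (Fin 4)) ⊆ pointSet B q := by
        intro x hx
        simp only [Finset.mem_insert, Finset.mem_singleton] at hx
        rcases hx with rfl | rfl | rfl <;> (rw [mem_pointSet]; assumption)
      have h3le : 3 ≤ (pointSet B q).card := by
        refine le_trans (le_of_eq ?_) (Finset.card_le_card hsub)
        rw [Finset.card_insert_of_notMem, Finset.card_insert_of_notMem,
          Finset.card_singleton]
        · simp [hf.ne (show (1:Fin 3) ≠ 2 by decide)]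
        · simp [hf.ne (show (0:Fin 3) ≠ 1 by decide), hf.ne (show (0:Fin 3) ≠ 2 by decide)]
      have hpsB : pointSet B q ∈ combinatorics B :=
        mem_combinatorics.2 ⟨by omega, q, rfl⟩
      obtain ⟨T, hT, hTcard⟩ := combEquiv_transfer hce hpsB
      rw [mem_combinatorics] at hT
      obtain ⟨_, q', hq'⟩ := hT
      -- now `pointSet A4 q'` has card ≥ 3, giving three concurrent lines of `A`
      have h3le' : 3 ≤ (pointSet A4 q').card := by rw [← hq', hTcard]; omega
      obtain ⟨a, b, c, ha, hb, hc, hab, hac, hbc⟩ := exists_three h3le'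
      exact hnc3 q' _ _ _ (hemb.ne hab) (hemb.ne hac) (hemb.ne hbc)
        ⟨(mem_pointSet (A := A4)).1 ha, (mem_pointSet (A := A4)).1 hb,
         (mem_pointSet (A := A4)).1 hc⟩
    exact rigid4_frame A4 B hA4frame hBframe



/-- `A` has a rigid pencil form: it contains an inductively rigid subarrangement `A'`
(indexed by `S`) having a singular point `P₀ = q₀` such that every multiple point `P` of
`A` (as a point `qP` of `ℂP²`) satisfies (RP1) at least two lines of `A'` pass through
`P`, or (RP2) the line joining `P` and `P₀` is a line of `A'`. -/
def HasRigidPencilForm {n : ℕ} (A : Fin n → ProjPlane) : Prop :=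
  ∃ S : Finset (Fin n),
    InductivelyRigid (fun k : {x : Fin n // x ∈ S} => A k.val) ∧
    ∃ q₀ : ProjPlane, 2 ≤ (S.filter fun i => incident (A i) q₀).card ∧
      ∀ qP : ProjPlane, 3 ≤ (pointSet A qP).card →
        (2 ≤ (S.filter fun i => incident (A i) qP).card ∨
          ∃ i ∈ S, incident (A i) qP ∧ incident (A i) q₀)

/-- Every multiple point of `A` lies on some line of `D`. -/
def coversMult {n : ℕ} (A : Fin n → ProjPlane) (D : Finset (Fin n)) : Prop :=
  ∀ q : ProjPlane, 3 ≤ (pointSet A q).card → ∃ i ∈ D, incident (A i) q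

/-- `A` is of class `C_k`: `k` is the minimal cardinality of a set of lines of `A`
containing all multiple points of `A`. -/
def IsCk {n : ℕ} (A : Fin n → ProjPlane) (k : ℕ) : Prop :=
  (∃ D, D.card = k ∧ coversMult A D) ∧ ∀ D, coversMult A D → k ≤ D.card

/- ### final helpers -/

lemma two_le_filter {n : ℕ} {S : Finset (Fin n)} {P : Fin n → Prop} [DecidablePred P]
    {x y : Fin n} (hx : x ∈ S) (hy : y ∈ S) (hxy : x ≠ y) (hPx : P x) (hPy : P y) :
    2 ≤ (S.filter P).card := by
  have := Finset.one_lt_card.2 ⟨x, Finset.mem_filter.2 ⟨hx, hPx⟩,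
    y, Finset.mem_filter.2 ⟨hy, hPy⟩, hxy⟩
  omega

lemma mem4_triple {α : Type*} {e x y z i j k : α} {P : α → Prop}
    (hi : i = e ∨ i = x ∨ i = y ∨ i = z) (hj : j = e ∨ j = x ∨ j = y ∨ j = z)
    (hk : k = e ∨ k = x ∨ k = y ∨ k = z)
    (hij : i ≠ j) (hik : i ≠ k) (hjk : j ≠ k)
    (hPi : P i) (hPj : P j) (hPk : P k)
    (t1 : ¬(P x ∧ P y ∧ P z)) (t2 : ¬(P x ∧ P y ∧ P e))
    (t3 : ¬(P x ∧ P z ∧ P e)) (t4 : ¬(P y ∧ P z ∧ P e)) : False := by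
  rcases hi with rfl | rfl | rfl | rfl <;> rcases hj with rfl | rfl | rfl | rfl <;>
    rcases hk with rfl | rfl | rfl | rfl <;> tauto

lemma subtype_inj {n : ℕ} (A : Fin n → ProjPlane) (hA : Function.Injective A)
    (S : Finset (Fin n)) : Function.Injective (fun k : {x : Fin n // x ∈ S} => A k.val) :=
  fun j k hjk => Subtype.ext (hA hjk)

/- ### the concurrent case -/

lemma caseII {n : ℕ} (A : Fin n → ProjPlane) (hA : Function.Injective A)
    (x y z : Fin n) (hxy : x ≠ y) (hxz : x ≠ z) (hyz : y ≠ z)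
    (hcov : ∀ q, 3 ≤ (pointSet A q).card →
      incident (A x) q ∨ incident (A y) q ∨ incident (A z) q)
    (q : ProjPlane) (hqx : incident (A x) q) (hqy : incident (A y) q)
    (hqz : incident (A z) q) : HasRigidPencilForm A := by
  refine ⟨{x, y, z}, ?_, q, ?_, ?_⟩
  · apply IR_three_conc _ (subtype_inj A hA _)
    · rw [Fintype.card_coe]
      exact Finset.card_eq_three.2 ⟨x, y, z, hxy, hxz, hyz, rfl⟩
    · refine ⟨q, fun i => ?_⟩
      have hi := i.2
      simp only [Finset.mem_insert, Finset.mem_singleton] at hi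
      rcases hi with h | h | h <;> (show incident (A i.val) q; rw [h]) <;> assumption
  · exact two_le_filter (by simp) (by simp) hxy hqx hqy
  · intro qP hm
    rcases hcov qP hm with h | h | h
    · exact Or.inr ⟨x, by simp, h, hqx⟩
    · exact Or.inr ⟨y, by simp, h, hqy⟩
    · exact Or.inr ⟨z, by simp, h, hqz⟩

/- ### the general position case -/

lemma caseI {n : ℕ} (A : Fin n → ProjPlane) (hA : Function.Injective A)
    (x y z : Fin n) (hxy : x ≠ y) (hxz : x ≠ z) (hyz : y ≠ z)
    (hcov : ∀ q, 3 ≤ (pointSet A q).card →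
      incident (A x) q ∨ incident (A y) q ∨ incident (A z) q)
    (hnc : ¬ ∃ q, incident (A x) q ∧ incident (A y) q ∧ incident (A z) q)
    (Pz : ProjPlane) (hPzinc : incident (A z) Pz) (hPzm : 3 ≤ (pointSet A Pz).card)
    (huniq : ∀ q, incident (A z) q → 3 ≤ (pointSet A q).card → q = Pz) :
    HasRigidPencilForm A := by
  have hAxy : A x ≠ A y := hA.ne hxy
  set q₀ := crossPt (A x) (A y) hAxy with hq₀
  have hq₀x : incident (A x) q₀ := incident_crossPt_left hAxy
  have hq₀y : incident (A y) q₀ := incident_crossPt_right hAxy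
  by_cases hon : incident (A x) Pz ∨ incident (A y) Pz
  · -- subcase A : the special point lies on one of the two other lines; use S = {x,y,z}
    refine ⟨{x, y, z}, ?_, q₀, ?_, ?_⟩
    · apply IR_three_noconc _ (subtype_inj A hA _)
      · rw [Fintype.card_coe]
        exact Finset.card_eq_three.2 ⟨x, y, z, hxy, hxz, hyz, rfl⟩
      · rintro ⟨q, hq⟩
        exact hnc ⟨q, hq ⟨x, by simp⟩, hq ⟨y, by simp⟩, hq ⟨z, by simp⟩⟩
    · exact two_le_filter (by simp) (by simp) hxy hq₀x hq₀y
    · intro qP hm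
      rcases hcov qP hm with h | h | h
      · exact Or.inr ⟨x, by simp, h, hq₀x⟩
      · exact Or.inr ⟨y, by simp, h, hq₀y⟩
      · left
        have hqP : qP = Pz := huniq qP h hm
        subst hqP
        rcases hon with h' | h'
        · exact two_le_filter (by simp) (by simp) hxz h' hPzinc
        · exact two_le_filter (by simp) (by simp) hyz h' hPzinc
  · -- subcase B : the special point is off both other lines
    push_neg at hon
    obtain ⟨hPx, hPy⟩ := hon
    have hq₀Pz : q₀ ≠ Pz := fun he => hPx (he ▸ hq₀x)
    -- choose a second line `e` through `Pz` avoiding `q₀`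
    obtain ⟨e, heT, hez, heq₀⟩ :
        ∃ e ∈ pointSet A Pz, e ≠ z ∧ ¬ incident (A e) q₀ := by
      by_contra hno
      push_neg at hno
      have hzT : z ∈ pointSet A Pz := mem_pointSet.2 hPzinc
      have herase : 2 ≤ ((pointSet A Pz).erase z).card := by
        rw [Finset.card_erase_of_mem hzT]
        omega
      obtain ⟨d, hd, e, he, hde⟩ := Finset.one_lt_card.1 (show 1 < ((pointSet A Pz).erase z).card by omega)
      obtain ⟨hdz, hdT⟩ := Finset.mem_erase.1 hd
      obtain ⟨hez, heT⟩ := Finset.mem_erase.1 he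
      have hd0 : incident (A d) q₀ := hno d hdT hdz
      have he0 : incident (A e) q₀ := hno e heT hez
      exact hq₀Pz (eq_of_two_lines (hA.ne hde) hd0 he0
        (mem_pointSet.1 hdT) (mem_pointSet.1 heT))
    have hePz : incident (A e) Pz := mem_pointSet.1 heT
    have hex : e ≠ x := fun h => hPx (h ▸ hePz)
    have hey : e ≠ y := fun h => hPy (h ▸ hePz)
    -- the four "no three concurrent" facts
    have t1 : ∀ q, ¬(incident (A x) q ∧ incident (A y) q ∧ incident (A z) q) :=
      fun q h => hnc ⟨q, h⟩
    have t2 : ∀ q, ¬(incident (A x) q ∧ incident (A y) q ∧ incident (A e) q) := by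
      rintro q ⟨h1, h2, h3⟩
      have : q = q₀ := eq_of_two_lines hAxy h1 h2 hq₀x hq₀y
      exact heq₀ (this ▸ h3)
    have t3 : ∀ q, ¬(incident (A x) q ∧ incident (A z) q ∧ incident (A e) q) := by
      rintro q ⟨h1, h2, h3⟩
      have : q = Pz := eq_of_two_lines (hA.ne hez) h3 h2 hePz hPzinc
      exact hPx (this ▸ h1)
    have t4 : ∀ q, ¬(incident (A y) q ∧ incident (A z) q ∧ incident (A e) q) := by
      rintro q ⟨h1, h2, h3⟩
      have : q = Pz := eq_of_two_lines (hA.ne hez) h3 h2 hePz hPzinc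
      exact hPy (this ▸ h1)
    refine ⟨insert e {x, y, z}, ?_, q₀, ?_, ?_⟩
    · apply IR_four _ (subtype_inj A hA _)
      · rw [Fintype.card_coe]
        rw [Finset.card_insert_of_notMem (by simp [hex, hey, hez])]
        rw [Finset.card_eq_three.2 ⟨x, y, z, hxy, hxz, hyz, rfl⟩]
      · intro q i j k hij hik hjk h
        obtain ⟨h1, h2, h3⟩ := h
        have hvi := i.2
        have hvj := j.2
        have hvk := k.2
        simp only [Finset.mem_insert, Finset.mem_singleton] at hvi hvj hvk
        exact mem4_triple (P := fun w => incident (A w) q) hvi hvj hvk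
          (fun h => hij (Subtype.ext h)) (fun h => hik (Subtype.ext h))
          (fun h => hjk (Subtype.ext h)) h1 h2 h3
          (t1 q) (t2 q) (t3 q) (t4 q)
    · exact two_le_filter (by simp) (by simp) hxy hq₀x hq₀y
    · intro qP hm
      rcases hcov qP hm with h | h | h
      · exact Or.inr ⟨x, by simp, h, hq₀x⟩
      · exact Or.inr ⟨y, by simp, h, hq₀y⟩
      · left
        have hqP : qP = Pz := huniq qP h hm
        subst hqP
        exact two_le_filter (by simp) (by simp) (Ne.symm hez) hPzinc hePz



/-- Every `C₃` line arrangement of simple type has a rigid pencil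
form: here `D` is a set of three lines containing all multiple points of `A`, and `A` is
of simple type, i.e. either (i) the three lines of `D` are in general position (not
concurrent) and one of them contains exactly one multiple point, or (ii) the three lines
of `D` are concurrent. -/
theorem statement11 {n : ℕ} (A : Fin n → ProjPlane) (hA : Function.Injective A)
    (hC3 : IsCk A 3) (D : Finset (Fin n)) (hDcard : D.card = 3) (hDcov : coversMult A D)
    (hsimple :
      ((¬ ∃ q, ∀ i ∈ D, incident (A i) q) ∧
        ∃ i ∈ D, ∃! q : ProjPlane, incident (A i) q ∧ 3 ≤ (pointSet A q).card) ∨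
      (∃ q, ∀ i ∈ D, incident (A i) q)) :
    HasRigidPencilForm A := by
  obtain ⟨a, b, c, hab, hac, hbc, hD⟩ := Finset.card_eq_three.1 hDcard
  subst hD
  have hcov : ∀ q, 3 ≤ (pointSet A q).card →
      incident (A a) q ∨ incident (A b) q ∨ incident (A c) q := by
    intro q hq
    obtain ⟨i, hi, hinc⟩ := hDcov q hq
    simp only [Finset.mem_insert, Finset.mem_singleton] at hi
    rcases hi with rfl | rfl | rfl <;> tauto
  rcases hsimple with ⟨hnc, i0, hi0, P0, ⟨hP0inc, hP0m⟩, huniq⟩ | ⟨q, hq⟩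
  · -- case (i)
    have hnc' : ¬ ∃ q, incident (A a) q ∧ incident (A b) q ∧ incident (A c) q := by
      rintro ⟨q, h1, h2, h3⟩
      apply hnc
      refine ⟨q, fun i hi => ?_⟩
      simp only [Finset.mem_insert, Finset.mem_singleton] at hi
      rcases hi with rfl | rfl | rfl <;> assumption
    have huniq' : ∀ q, incident (A i0) q → 3 ≤ (pointSet A q).card → q = P0 :=
      fun q h1 h2 => huniq q ⟨h1, h2⟩
    simp only [Finset.mem_insert, Finset.mem_singleton] at hi0
    rcases hi0 with rfl | rfl | rfl
    · -- special line is `a`; use (x,y,z) = (b,c,a)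
      exact caseI A hA b c i0 hbc (Ne.symm hab) (Ne.symm hac)
        (fun q hq => by rcases hcov q hq with h | h | h <;> tauto)
        (by rintro ⟨q, h1, h2, h3⟩; exact hnc' ⟨q, h3, h1, h2⟩)
        P0 hP0inc hP0m huniq'
    · -- special line is `b`
      exact caseI A hA a c i0 hac hab (Ne.symm hbc)
        (fun q hq => by rcases hcov q hq with h | h | h <;> tauto)
        (by rintro ⟨q, h1, h2, h3⟩; exact hnc' ⟨q, h1, h3, h2⟩)
        P0 hP0inc hP0m huniq'
    · -- special line is `c`
      exact caseI A hA a b i0 hab hac hbc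
        (fun q hq => by rcases hcov q hq with h | h | h <;> tauto)
        hnc' P0 hP0inc hP0m huniq'
  · -- case (ii)
    have ha := hq a (by simp)
    have hb := hq b (by simp)
    have hc := hq c (by simp)
    exact caseII A hA a b c hab hac hbc hcov q ha hb hc
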